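/- Let h : ℝⁿ → ℝ be C¹, γ ≥ 0, β⁰ ∈ ℝ, M ∈ ℝ with M + β⁰ > 0. Let x : [0,∞) → ℝⁿ be C¹ with continuous velocity v(t) = x′(t), suppose h(x(t)) > 0 for all t ≥ 0, and let z : [0,∞) → ℝ be differentiable satisfying the barrier-state ODE z′(t) = −(z(t)+β⁰)² ⟨∇h(x(t)), v(t)⟩ − γ (z(t) + β⁰ − 1/h(x(t))) with consistent initialization z(0) = 1/h(x(0)) − β⁰. If z(t) ≤ M for all t ≥ 0, then 1/h(x(t)) ≤ M + β⁰, i.e., h(x(t)) ≥ 1/(M+β⁰) > 0 for all t ≥ 0: boundedness of the barrier state keeps the trajectory uniformly inside the safe set (the safety mechanism underlying Corollary 1). -/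

import Mathlib

open Set Metric

private lemma inner_gradient_eq' {n : ℕ} (h : EuclideanSpace ℝ (Fin n) → ℝ)
    (y w : EuclideanSpace ℝ (Fin n)) :
    (inner ℝ (gradient h y) w : ℝ) = fderiv ℝ h y w := by
  rw [gradient, InnerProductSpace.toDual_symm_apply]

/-- Key uniqueness lemma: the barrier state coincides with `1/h(x t) - β₀`. -/
private lemma barrier_state_eq {n : ℕ}
    (h : EuclideanSpace ℝ (Fin n) → ℝ) (hh : ContDiff ℝ 1 h)
    (γ : ℝ) (hγ : 0 ≤ γ) (β₀ : ℝ)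
    (x : ℝ → EuclideanSpace ℝ (Fin n)) (v : ℝ → EuclideanSpace ℝ (Fin n))
    (hx : ∀ t : ℝ, HasDerivAt x (v t) t) (hv : Continuous v)
    (hsafe : ∀ t : ℝ, 0 ≤ t → 0 < h (x t))
    (z : ℝ → ℝ)
    (hz : ∀ t : ℝ, 0 ≤ t →
      HasDerivAt z
        (-(z t + β₀) ^ 2 * (inner ℝ (gradient h (x t)) (v t) : ℝ)
          - γ * (z t + β₀ - 1 / h (x t))) t)
    (hz0 : z 0 = 1 / h (x 0) - β₀) :
    ∀ T : ℝ, 0 ≤ T → z T = 1 / h (x T) - β₀ := by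
  intro T hT
  set a : ℝ → ℝ := fun s => fderiv ℝ h (x s) (v s) with ha_def
  set b : ℝ → ℝ := fun s => 1 / h (x s) with hb_def
  set φ : ℝ → ℝ := fun s => b s - β₀ with hφ_def
  have hd : Differentiable ℝ h := hh.differentiable one_ne_zero
  have hxc : Continuous x := continuous_iff_continuousAt.2 fun t => (hx t).continuousAt
  have hac : Continuous a :=
    ((hh.continuous_fderiv one_ne_zero).comp hxc).clm_apply hv
  -- derivative of h ∘ x
  have hhx : ∀ s : ℝ, HasDerivAt (fun τ => h (x τ)) (a s) s := fun s =>
    (hd (x s)).hasFDerivAt.comp_hasDerivAt s (hx s)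
  -- derivative of b = 1 / (h ∘ x)
  have hb' : ∀ s : ℝ, 0 ≤ s → HasDerivAt b (-(b s) ^ 2 * a s) s := by
    intro s hs
    have hne : h (x s) ≠ 0 := ne_of_gt (hsafe s hs)
    have h1 := (hhx s).inv hne
    have heq : -(b s) ^ 2 * a s = -a s / h (x s) ^ 2 := by
      simp only [hb_def]; field_simp
    rw [heq]
    simpa only [hb_def, one_div, Pi.inv_def] using h1
  -- rewrite hz using a
  have hz' : ∀ t : ℝ, 0 ≤ t →
      HasDerivAt z (-(z t + β₀) ^ 2 * a t - γ * (z t + β₀ - b t)) t := by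
    intro t ht
    have := hz t ht
    rwa [inner_gradient_eq'] at this
  -- bounds on the compact interval
  obtain ⟨C₁, hC₁⟩ := isCompact_Icc.exists_bound_of_continuousOn
    (f := z) (fun s hs => ((hz' s hs.1).continuousAt).continuousWithinAt)
  obtain ⟨C₂, hC₂⟩ := isCompact_Icc.exists_bound_of_continuousOn
    (f := φ) (fun s hs => (((hb' s hs.1).continuousAt).sub continuousAt_const).continuousWithinAt)
  obtain ⟨A, hA⟩ := isCompact_Icc.exists_bound_of_continuousOn
    (f := a) hac.continuousOn
  set R : ℝ := max C₁ C₂ with hR_def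
  have h0T : (0:ℝ) ∈ Icc 0 T := ⟨le_refl 0, hT⟩
  have hR0 : 0 ≤ R := le_trans (norm_nonneg (z 0)) (le_trans (hC₁ 0 h0T) (le_max_left _ _))
  have hA0 : 0 ≤ A := le_trans (norm_nonneg (a 0)) (hA 0 h0T)
  set L : ℝ := A * (2 * R + 2 * |β₀|) + γ with hL_def
  have hL0 : 0 ≤ L := by positivity
  set K : NNReal := Real.toNNReal L with hK_def
  have hKL : (K : ℝ) = L := Real.coe_toNNReal L hL0
  -- clamped time
  set p : ℝ → ℝ := fun t => max 0 (min t T) with hp_def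
  have hp_mem : ∀ t, p t ∈ Icc 0 T := fun t =>
    ⟨le_max_left _ _, max_le hT (min_le_right _ _)⟩
  have hp_id : ∀ t ∈ Ico (0:ℝ) T, p t = t := by
    intro t ht
    simp only [hp_def]
    rw [min_eq_left ht.2.le, max_eq_right ht.1]
  -- the vector field
  set V : ℝ → ℝ → ℝ := fun t y => -(y + β₀) ^ 2 * a (p t) - γ * (y + β₀ - b (p t))
    with hV_def
  have hlip : ∀ t : ℝ, LipschitzOnWith K (V t) (closedBall (0:ℝ) R) := by
    intro t
    apply LipschitzOnWith.of_dist_le_mul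
    intro y₁ hy₁ y₂ hy₂
    rw [Real.dist_eq, Real.dist_eq, hKL]
    have hy₁' : |y₁| ≤ R := by rwa [mem_closedBall, Real.dist_eq, sub_zero] at hy₁
    have hy₂' : |y₂| ≤ R := by rwa [mem_closedBall, Real.dist_eq, sub_zero] at hy₂
    have hdiff : V t y₁ - V t y₂ = (y₂ - y₁) * (a (p t) * (y₁ + y₂ + 2 * β₀) + γ) := by
      simp only [hV_def]; ring
    rw [hdiff, abs_mul]
    have h1 : |a (p t) * (y₁ + y₂ + 2 * β₀) + γ| ≤ L := by
      have hab : |a (p t)| ≤ A := hA _ (hp_mem t)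
      have hsum : |y₁ + y₂ + 2 * β₀| ≤ 2 * R + 2 * |β₀| := by
        calc |y₁ + y₂ + 2 * β₀| ≤ |y₁ + y₂| + |2 * β₀| := abs_add_le _ _
          _ ≤ |y₁| + |y₂| + |2 * β₀| := add_le_add_left (abs_add_le y₁ y₂) _
          _ ≤ R + R + 2 * |β₀| := by rw [abs_mul, abs_two]; gcongr
          _ = 2 * R + 2 * |β₀| := by ring
      calc |a (p t) * (y₁ + y₂ + 2 * β₀) + γ|
          ≤ |a (p t) * (y₁ + y₂ + 2 * β₀)| + |γ| := abs_add_le _ _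
        _ = |a (p t)| * |y₁ + y₂ + 2 * β₀| + γ := by rw [abs_mul, abs_of_nonneg hγ]
        _ ≤ A * (2 * R + 2 * |β₀|) + γ := by gcongr
    calc |y₂ - y₁| * |a (p t) * (y₁ + y₂ + 2 * β₀) + γ|
        ≤ |y₂ - y₁| * L := mul_le_mul_of_nonneg_left h1 (abs_nonneg _)
      _ = L * |y₁ - y₂| := by rw [abs_sub_comm]; ring
  -- apply uniqueness
  have main : EqOn z φ (Icc 0 T) := by
    apply ODE_solution_unique_of_mem_Icc_right (fun t _ => hlip t)
    · exact fun s hs => ((hz' s hs.1).continuousAt).continuousWithinAt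
    · intro s hs
      have := (hz' s hs.1).hasDerivWithinAt (s := Ici s)
      have hps : p s = s := hp_id s hs
      simpa only [hV_def, hps] using this
    · intro s hs
      rw [mem_closedBall, Real.dist_eq, sub_zero]
      exact le_trans (hC₁ s ⟨hs.1, hs.2.le⟩) (le_max_left _ _)
    · exact fun s hs =>
        ((((hb' s hs.1).continuousAt).sub continuousAt_const)).continuousWithinAt
    · intro s hs
      have hps : p s = s := hp_id s hs
      have hder : HasDerivAt φ (-(b s) ^ 2 * a s) s := (hb' s hs.1).sub_const β₀
      have hVeq : V s (φ s) = -(b s) ^ 2 * a s := by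
        simp only [hV_def, hφ_def, hps]
        ring
      rw [hVeq]
      exact hder.hasDerivWithinAt
    · intro s hs
      rw [mem_closedBall, Real.dist_eq, sub_zero]
      exact le_trans (hC₂ s ⟨hs.1, hs.2.le⟩) (le_max_right _ _)
    · simp only [hφ_def, hb_def]
      exact hz0
  have := main ⟨hT, le_refl T⟩
  simpa [hφ_def, hb_def] using this

/-- Boundedness of the barrier state keeps the trajectory uniformly inside the
safe set (the safety mechanism underlying Corollary 1): if the barrier state
`z` solves the barrier-state ODE along a trajectory staying in the safe set,
is consistently initialized, and satisfies `z(t) ≤ M` with `M + β⁰ > 0`, then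
`1/h(x(t)) ≤ M + β⁰`, i.e. `h(x(t)) ≥ 1/(M+β⁰) > 0` for all `t ≥ 0`. -/
theorem barrier_state_bound_keeps_safety {n : ℕ}
    (h : EuclideanSpace ℝ (Fin n) → ℝ) (hh : ContDiff ℝ 1 h)
    (γ : ℝ) (hγ : 0 ≤ γ) (β₀ M : ℝ) (hMβ : 0 < M + β₀)
    (x : ℝ → EuclideanSpace ℝ (Fin n)) (v : ℝ → EuclideanSpace ℝ (Fin n))
    (hx : ∀ t : ℝ, HasDerivAt x (v t) t) (hv : Continuous v)
    (hsafe : ∀ t : ℝ, 0 ≤ t → 0 < h (x t))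
    (z : ℝ → ℝ)
    (hz : ∀ t : ℝ, 0 ≤ t →
      HasDerivAt z
        (-(z t + β₀) ^ 2 * (inner ℝ (gradient h (x t)) (v t) : ℝ)
          - γ * (z t + β₀ - 1 / h (x t))) t)
    (hz0 : z 0 = 1 / h (x 0) - β₀)
    (hzM : ∀ t : ℝ, 0 ≤ t → z t ≤ M) :
    (0:ℝ) < 1 / (M + β₀) ∧
    ∀ t : ℝ, 0 ≤ t → 1 / h (x t) ≤ M + β₀ ∧ 1 / (M + β₀) ≤ h (x t) := by
  refine ⟨one_div_pos.mpr hMβ, fun t ht => ?_⟩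
  have key := barrier_state_eq h hh γ hγ β₀ x v hx hv hsafe z hz hz0 t ht
  have h1 : 1 / h (x t) ≤ M + β₀ := by
    have := hzM t ht
    linarith [key]
  refine ⟨h1, ?_⟩
  have hpos := hsafe t ht
  rw [div_le_iff₀ hMβ]
  rw [div_le_iff₀ hpos] at h1
  nlinarith
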